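/- In the 1D problem, any minimizer u with |{u = 0}| > 0 of the functional ∫_0^a |u'|^2/2 + λ|{u ≠ 0}| with u(0) = u(a) = 1 satisfies: the sets E^± := {x : u'(x) = ±√(2λ)} have equal measure, |E^−| = |E^+| ≥ 1/√(2λ), and the cost of u is at least 2√(2λ). -/

import Mathlib

open MeasureTheory

/-- Admissible class for the 1D free boundary problem: `u ∈ W^{1,2}(0,a)`
(represented by its continuous representative, primitive of `g ∈ L²`),
with boundary values `u(0) = u(a) = 1`. -/
def Adm1D (a : ℝ) (u g : ℝ → ℝ) : Prop :=
  ContinuousOn u (Set.Icc 0 a) ∧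
  MemLp g 2 (volume.restrict (Set.Ioo 0 a)) ∧
  (∀ x ∈ Set.Icc 0 a, u x = 1 + ∫ s in (0:ℝ)..x, g s) ∧
  u 0 = 1 ∧ u a = 1

/-- The cost `∫_0^a |u'|²/2 dt + λ |{u ≠ 0}|`. -/
noncomputable def cost1D (a l : ℝ) (u g : ℝ → ℝ) : ℝ :=
  (∫ s in Set.Ioo 0 a, g s ^ 2 / 2) +
    l * (volume {s | s ∈ Set.Ioo 0 a ∧ u s ≠ 0}).toReal

/-- The value `I(a,λ)` of the 1D free boundary problem. -/
noncomputable def I1D (a l : ℝ) : ℝ :=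
  sInf {c | ∃ u g, Adm1D a u g ∧ c = cost1D a l u g}

/-- If `u` is admissible, nonnegative, vanishes on a set of positive measure,
and satisfies the integrated Euler–Lagrange condition `u' ∈ {0, ±√(2λ)}` a.e.,
then the sets `E^± = {u' = ±√(2λ)}` have equal measure, this common measure is
at least `1/√(2λ)`, and the cost is at least `2√(2λ)`. -/
theorem stmt15 (a l : ℝ) (ha : 0 < a) (hl : 0 < l) (u g : ℝ → ℝ)
    (hadm : Adm1D a u g)
    (hpos : ∀ x ∈ Set.Icc 0 a, 0 ≤ u x)
    (hzero : 0 < volume {s | s ∈ Set.Ioo 0 a ∧ u s = 0})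
    (hEL : ∀ᵐ s ∂(volume.restrict (Set.Ioo 0 a)),
      g s = 0 ∨ g s = Real.sqrt (2 * l) ∨ g s = -Real.sqrt (2 * l)) :
    volume {s | s ∈ Set.Ioo 0 a ∧ g s = -Real.sqrt (2 * l)} =
      volume {s | s ∈ Set.Ioo 0 a ∧ g s = Real.sqrt (2 * l)} ∧
    ENNReal.ofReal (1 / Real.sqrt (2 * l)) ≤
      volume {s | s ∈ Set.Ioo 0 a ∧ g s = -Real.sqrt (2 * l)} ∧
    2 * Real.sqrt (2 * l) ≤ cost1D a l u g := by
  obtain ⟨hu_cont, hg2, hrep, hu0, hua⟩ := hadm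
  set c := Real.sqrt (2 * l) with hc_def
  have hc : 0 < c := Real.sqrt_pos.2 (by linarith)
  have hc2 : c ^ 2 = 2 * l := Real.sq_sqrt (by linarith)
  set μ := volume.restrict (Set.Ioo 0 a) with hμ
  haveI : IsFiniteMeasure μ := by
    constructor
    rw [hμ, Measure.restrict_apply_univ, Real.volume_Ioo]
    exact ENNReal.ofReal_lt_top
  have hg1 : Integrable g μ := hg2.integrable one_le_two
  have hgsq : Integrable (fun s => g s ^ 2) μ := hg2.integrable_sq
  have hgsq2 : Integrable (fun s => g s ^ 2 / 2) μ := hgsq.div_const 2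
  -- integrability on subintervals
  have hg1' : IntegrableOn g (Set.Ioo 0 a) volume := hg1
  have hgsq2' : IntegrableOn (fun s => g s ^ 2 / 2) (Set.Ioo 0 a) volume := hgsq2
  have hIntOn : ∀ p q : ℝ, 0 ≤ p → q ≤ a → IntegrableOn g (Set.Ioo p q) volume :=
    fun p q hp hq => hg1'.mono_set (Set.Ioo_subset_Ioo hp hq)
  -- representation via set integrals
  have hval : ∀ x ∈ Set.Icc 0 a, u x = 1 + ∫ s in Set.Ioo 0 x, g s := by
    intro x hx
    rw [hrep x hx, intervalIntegral.integral_of_le hx.1,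
      MeasureTheory.integral_Ioc_eq_integral_Ioo]
  -- the zero set and its extreme points
  obtain ⟨x₀, hx₀Ioo, hx₀0⟩ := nonempty_of_measure_ne_zero hzero.ne'
  have hx₀Icc : x₀ ∈ Set.Icc 0 a := Set.Ioo_subset_Icc_self hx₀Ioo
  set Z := Set.Icc 0 a ∩ u ⁻¹' {0} with hZ
  have hZne : Z.Nonempty := ⟨x₀, hx₀Icc, hx₀0⟩
  have hZclosed : IsClosed Z :=
    hu_cont.preimage_isClosed_of_isClosed isClosed_Icc isClosed_singleton
  have hZcomp : IsCompact Z := isCompact_Icc.of_isClosed_subset hZclosed Set.inter_subset_left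
  set β := sInf Z with hβ
  set γ := sSup Z with hγ
  have hβZ : β ∈ Z := hZcomp.sInf_mem hZne
  have hγZ : γ ∈ Z := hZcomp.sSup_mem hZne
  have huβ : u β = 0 := hβZ.2
  have huγ : u γ = 0 := hγZ.2
  have hβIcc : β ∈ Set.Icc 0 a := hβZ.1
  have hγIcc : γ ∈ Set.Icc 0 a := hγZ.1
  have hβγ : β ≤ γ := csInf_le_csSup hZne hZcomp.bddBelow hZcomp.bddAbove
  have hβpos : 0 < β := by
    rcases lt_or_eq_of_le hβIcc.1 with h | h
    · exact h
    · exfalso; rw [← h] at huβ; rw [hu0] at huβ; norm_num at huβ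
  have hγa : γ < a := by
    rcases lt_or_eq_of_le hγIcc.2 with h | h
    · exact h
    · exfalso; rw [h] at huγ; rw [hua] at huγ; norm_num at huγ
  -- u does not vanish on (0,β) and (γ,a)
  have hne1 : ∀ x ∈ Set.Ioo (0:ℝ) β, u x ≠ 0 := by
    intro x hx hx0
    exact absurd (csInf_le hZcomp.bddBelow ⟨⟨hx.1.le, hx.2.le.trans hβIcc.2⟩, hx0⟩)
      (not_le.2 hx.2)
  have hne2 : ∀ x ∈ Set.Ioo γ a, u x ≠ 0 := by
    intro x hx hx0
    exact absurd (le_csSup hZcomp.bddAbove ⟨⟨hγIcc.1.trans hx.1.le, hx.2.le⟩, hx0⟩)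
      (not_le.2 hx.1)
  -- core estimate on an interval where u drops by 1
  have hptwise : ∀ x : ℝ, c * |x| ≤ x ^ 2 / 2 + l := by
    intro x
    nlinarith [sq_nonneg (|x| - c), sq_abs x, hc.le]
  have hcore : ∀ p q : ℝ, 0 ≤ p → p ≤ q → q ≤ a →
      |∫ s in Set.Ioo p q, g s| = 1 →
      c ≤ (∫ s in Set.Ioo p q, g s ^ 2 / 2) + l * (q - p) := by
    intro p q hp hpq hq hint
    have hI : IntegrableOn g (Set.Ioo p q) volume := hIntOn p q hp hq
    have hIa : IntegrableOn (fun s => |g s|) (Set.Ioo p q) volume := hI.abs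
    have hIsq : IntegrableOn (fun s => g s ^ 2 / 2) (Set.Ioo p q) volume :=
      hgsq2'.mono_set (Set.Ioo_subset_Ioo hp hq)
    have h1 : c = c * |∫ s in Set.Ioo p q, g s| := by rw [hint, mul_one]
    have h2 : |∫ s in Set.Ioo p q, g s| ≤ ∫ s in Set.Ioo p q, |g s| := by
      simpa [Real.norm_eq_abs] using
        norm_integral_le_integral_norm (μ := volume.restrict (Set.Ioo p q)) g
    have h3 : (∫ s in Set.Ioo p q, c * |g s|) ≤
        ∫ s in Set.Ioo p q, (g s ^ 2 / 2 + l) := by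
      refine integral_mono (hIa.const_mul c) (hIsq.add (integrable_const l)) ?_
      intro s; exact hptwise (g s)
    have h4 : (∫ s in Set.Ioo p q, (g s ^ 2 / 2 + l)) =
        (∫ s in Set.Ioo p q, g s ^ 2 / 2) + l * (q - p) := by
      rw [integral_add hIsq (integrable_const l), setIntegral_const, Real.volume_real_Ioo_of_le hpq,
        smul_eq_mul, mul_comm]
    calc c = c * |∫ s in Set.Ioo p q, g s| := h1
      _ ≤ c * ∫ s in Set.Ioo p q, |g s| := by
          exact mul_le_mul_of_nonneg_left h2 hc.le
      _ = ∫ s in Set.Ioo p q, c * |g s| := (integral_const_mul c _).symm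
      _ ≤ ∫ s in Set.Ioo p q, (g s ^ 2 / 2 + l) := h3
      _ = _ := h4
  -- integral values
  have hint0a : (∫ s in Set.Ioo 0 a, g s) = 0 := by
    have := hval a ⟨ha.le, le_rfl⟩; rw [hua] at this; linarith
  have hintβ : (∫ s in Set.Ioo 0 β, g s) = -1 := by
    have := hval β hβIcc; rw [huβ] at this; linarith
  have hintγ : (∫ s in Set.Ioo 0 γ, g s) = -1 := by
    have := hval γ hγIcc; rw [huγ] at this; linarith
  have hIadd : (∫ s in Set.Ioo 0 γ, g s) + ∫ s in Set.Ioo γ a, g s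
      = ∫ s in Set.Ioo 0 a, g s := by
    have h1 : IntervalIntegrable g volume 0 γ := by
      rw [intervalIntegrable_iff_integrableOn_Ioc_of_le hγIcc.1,
        integrableOn_Ioc_iff_integrableOn_Ioo]
      exact hIntOn 0 γ le_rfl hγIcc.2
    have h2 : IntervalIntegrable g volume γ a := by
      rw [intervalIntegrable_iff_integrableOn_Ioc_of_le hγa.le,
        integrableOn_Ioc_iff_integrableOn_Ioo]
      exact hIntOn γ a hγIcc.1 le_rfl
    have := intervalIntegral.integral_add_adjacent_intervals h1 h2
    rw [intervalIntegral.integral_of_le hγIcc.1, intervalIntegral.integral_of_le hγa.le,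
      intervalIntegral.integral_of_le ha.le, MeasureTheory.integral_Ioc_eq_integral_Ioo,
      MeasureTheory.integral_Ioc_eq_integral_Ioo,
      MeasureTheory.integral_Ioc_eq_integral_Ioo] at this
    exact this
  have hintγa : (∫ s in Set.Ioo γ a, g s) = 1 := by
    rw [hintγ, hint0a] at hIadd; linarith
  -- the two core estimates
  have hest1 : c ≤ (∫ s in Set.Ioo 0 β, g s ^ 2 / 2) + l * (β - 0) :=
    hcore 0 β le_rfl hβIcc.1 hβIcc.2 (by rw [hintβ]; norm_num)
  have hest2 : c ≤ (∫ s in Set.Ioo γ a, g s ^ 2 / 2) + l * (a - γ) :=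
    hcore γ a hγIcc.1 hγa.le le_rfl (by rw [hintγa]; norm_num)
  -- cost estimate
  have hdisj : Disjoint (Set.Ioo (0:ℝ) β) (Set.Ioo γ a) := by
    rw [Set.disjoint_left]
    rintro x ⟨_, h2⟩ ⟨h3, _⟩
    linarith
  -- the set where u ≠ 0
  have hUsub : Set.Ioo 0 β ∪ Set.Ioo γ a ⊆ {s | s ∈ Set.Ioo 0 a ∧ u s ≠ 0} := by
    rintro x (hx | hx)
    · exact ⟨⟨hx.1, lt_of_lt_of_le hx.2 hβIcc.2⟩, hne1 x hx⟩
    · exact ⟨⟨lt_of_le_of_lt hγIcc.1 hx.1, hx.2⟩, hne2 x hx⟩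
  have hvolU : volume (Set.Ioo (0:ℝ) β ∪ Set.Ioo γ a)
      = ENNReal.ofReal β + ENNReal.ofReal (a - γ) := by
    rw [measure_union hdisj measurableSet_Ioo, Real.volume_Ioo, Real.volume_Ioo, sub_zero]
  have hΩle : volume {s | s ∈ Set.Ioo 0 a ∧ u s ≠ 0} ≤ ENNReal.ofReal a := by
    calc volume {s | s ∈ Set.Ioo 0 a ∧ u s ≠ 0} ≤ volume (Set.Ioo (0:ℝ) a) :=
          measure_mono (fun x hx => hx.1)
      _ = ENNReal.ofReal a := by rw [Real.volume_Ioo, sub_zero]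
  have hΩtop : volume {s | s ∈ Set.Ioo 0 a ∧ u s ≠ 0} ≠ ⊤ :=
    (lt_of_le_of_lt hΩle ENNReal.ofReal_lt_top).ne
  have hΩlow : β + (a - γ) ≤ (volume {s | s ∈ Set.Ioo 0 a ∧ u s ≠ 0}).toReal := by
    have h1 : ENNReal.ofReal β + ENNReal.ofReal (a - γ)
        ≤ volume {s | s ∈ Set.Ioo 0 a ∧ u s ≠ 0} := hvolU ▸ measure_mono hUsub
    have h2 := ENNReal.toReal_mono hΩtop h1
    rwa [ENNReal.toReal_add ENNReal.ofReal_ne_top ENNReal.ofReal_ne_top,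
      ENNReal.toReal_ofReal hβpos.le, ENNReal.toReal_ofReal (by linarith)] at h2
  have hsplit : (∫ s in Set.Ioo 0 β, g s ^ 2 / 2) + (∫ s in Set.Ioo γ a, g s ^ 2 / 2)
      ≤ ∫ s in Set.Ioo 0 a, g s ^ 2 / 2 := by
    have hu : (∫ s in Set.Ioo (0:ℝ) β ∪ Set.Ioo γ a, g s ^ 2 / 2)
        = (∫ s in Set.Ioo 0 β, g s ^ 2 / 2) + ∫ s in Set.Ioo γ a, g s ^ 2 / 2 :=
      setIntegral_union hdisj measurableSet_Ioo
        (hgsq2'.mono_set (Set.Ioo_subset_Ioo le_rfl hβIcc.2))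
        (hgsq2'.mono_set (Set.Ioo_subset_Ioo hγIcc.1 le_rfl))
    rw [← hu]
    refine setIntegral_mono_set hgsq2' (Filter.Eventually.of_forall fun s => by positivity)
      (HasSubset.Subset.eventuallyLE ?_)
    rintro x (hx | hx)
    exacts [⟨hx.1, hx.2.trans_le hβIcc.2⟩, ⟨lt_of_le_of_lt hγIcc.1 hx.1, hx.2⟩]
  have hcost : 2 * c ≤ cost1D a l u g := by
    have hmul : l * (β + (a - γ)) ≤ l * (volume {s | s ∈ Set.Ioo 0 a ∧ u s ≠ 0}).toReal :=
      mul_le_mul_of_nonneg_left hΩlow hl.le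
    unfold cost1D
    nlinarith [hest1, hest2, hsplit, hmul]
  -- measurable representative
  set gt := hg2.1.mk g with hgt
  have hgtm : StronglyMeasurable gt := hg2.1.stronglyMeasurable_mk
  have hae : g =ᵐ[μ] gt := hg2.1.ae_eq_mk
  set A := {s | s ∈ Set.Ioo 0 a ∧ gt s = c} with hA
  set B := {s | s ∈ Set.Ioo 0 a ∧ gt s = -c} with hB
  have hAm : MeasurableSet A :=
    measurableSet_Ioo.inter (hgtm.measurable (measurableSet_singleton c))
  have hBm : MeasurableSet B :=
    measurableSet_Ioo.inter (hgtm.measurable (measurableSet_singleton (-c)))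
  have hmem : ∀ᵐ s ∂μ, s ∈ Set.Ioo 0 a := ae_restrict_mem measurableSet_Ioo
  have hELt : ∀ᵐ s ∂μ, gt s = 0 ∨ gt s = c ∨ gt s = -c := by
    filter_upwards [hEL, hae] with s h1 h2
    rw [← h2]; exact h1
  have hform : gt =ᵐ[μ]
      fun s => Set.indicator A (fun _ => c) s - Set.indicator B (fun _ => c) s := by
    filter_upwards [hELt, hmem] with s hs hsI
    have hAmem : s ∈ A ↔ gt s = c := by
      simp only [hA, Set.mem_setOf_eq]
      exact ⟨fun h => h.2, fun h => ⟨hsI, h⟩⟩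
    have hBmem : s ∈ B ↔ gt s = -c := by
      simp only [hB, Set.mem_setOf_eq]
      exact ⟨fun h => h.2, fun h => ⟨hsI, h⟩⟩
    rcases hs with h | h | h
    · have h1 : s ∉ A := fun hx => by have := hAmem.1 hx; linarith
      have h2 : s ∉ B := fun hx => by have := hBmem.1 hx; linarith
      rw [Set.indicator_of_notMem h1, Set.indicator_of_notMem h2, h]; ring
    · have h1 : s ∈ A := hAmem.2 h
      have h2 : s ∉ B := fun hx => by have := hBmem.1 hx; linarith
      rw [Set.indicator_of_mem h1, Set.indicator_of_notMem h2, h]; ring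
    · have h1 : s ∉ A := fun hx => by have := hAmem.1 hx; linarith
      have h2 : s ∈ B := hBmem.2 h
      rw [Set.indicator_of_notMem h1, Set.indicator_of_mem h2, h]; ring
  have hintgt : ∫ s, gt s ∂μ = 0 := by
    rw [← integral_congr_ae hae]
    exact hint0a
  have hform_int : ∫ s, (Set.indicator A (fun _ => c) s - Set.indicator B (fun _ => c) s) ∂μ
      = (μ A).toReal * c - (μ B).toReal * c := by
    rw [integral_sub ((integrable_const c).indicator hAm) ((integrable_const c).indicator hBm),
      integral_indicator_const c hAm, integral_indicator_const c hBm, smul_eq_mul, smul_eq_mul, measureReal_def, measureReal_def]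
  have hABeq : μ A = μ B := by
    have h0 : (μ A).toReal * c - (μ B).toReal * c = 0 := by
      rw [← hform_int, ← integral_congr_ae hform, hintgt]
    have h1 : (μ A).toReal * c = (μ B).toReal * c := by linarith
    exact (ENNReal.toReal_eq_toReal_iff' (measure_ne_top μ A) (measure_ne_top μ B)).1
      (mul_right_cancel₀ hc.ne' h1)
  have hμA : μ A = volume A := by
    rw [hμ, Measure.restrict_apply hAm, Set.inter_eq_left.2 (fun s hs => hs.1)]
  have hμB : μ B = volume B := by
    rw [hμ, Measure.restrict_apply hBm, Set.inter_eq_left.2 (fun s hs => hs.1)]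
  -- transfer from gt back to g
  have hnull : volume {s | s ∈ Set.Ioo 0 a ∧ ¬ g s = gt s} = 0 := by
    have h := hae
    rw [Filter.EventuallyEq, ae_iff, hμ, Measure.restrict_apply' measurableSet_Ioo] at h
    refine measure_mono_null ?_ h
    rintro s ⟨h1, h2⟩; exact ⟨h2, h1⟩
  have htrans : ∀ v : ℝ, volume {s | s ∈ Set.Ioo 0 a ∧ g s = v}
      = volume {s | s ∈ Set.Ioo 0 a ∧ gt s = v} := by
    intro v
    apply measure_congr
    rw [MeasureTheory.ae_eq_set]
    constructor
    · refine measure_mono_null ?_ hnull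
      rintro s ⟨⟨hsI, hsv⟩, hs2⟩
      exact ⟨hsI, fun he => hs2 ⟨hsI, by rw [← he]; exact hsv⟩⟩
    · refine measure_mono_null ?_ hnull
      rintro s ⟨⟨hsI, hsv⟩, hs2⟩
      exact ⟨hsI, fun he => hs2 ⟨hsI, he.trans hsv⟩⟩
  -- Part 2: lower bound on the measure of B
  have hsub : Set.Ioo 0 x₀ ⊆ Set.Ioo 0 a := Set.Ioo_subset_Ioo le_rfl hx₀Icc.2
  have hrle : volume.restrict (Set.Ioo 0 x₀) ≤ μ := by
    rw [hμ]; exact Measure.restrict_mono hsub le_rfl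
  have hgt_int : Integrable gt μ := hg1.congr hae
  have hgt_int' : Integrable gt (volume.restrict (Set.Ioo 0 x₀)) :=
    hgt_int.mono_measure hrle
  have hintx₀ : (∫ s in Set.Ioo 0 x₀, gt s) = -1 := by
    have h1 := hval x₀ hx₀Icc
    rw [hx₀0] at h1
    have hae' : g =ᵐ[volume.restrict (Set.Ioo 0 x₀)] gt :=
      ae_restrict_of_ae_restrict_of_subset hsub hae
    have h2 : (∫ s in Set.Ioo 0 x₀, gt s) = ∫ s in Set.Ioo 0 x₀, g s :=
      integral_congr_ae hae'.symm
    rw [h2]; linarith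
  have hlower : ∀ᵐ s ∂(volume.restrict (Set.Ioo 0 x₀)),
      Set.indicator B (fun _ => -c) s ≤ gt s := by
    filter_upwards [ae_restrict_of_ae_restrict_of_subset hsub hELt,
      ae_restrict_mem measurableSet_Ioo] with s hs hsI
    by_cases hsB : s ∈ B
    · rw [Set.indicator_of_mem hsB]
      rcases hs with h | h | h <;> linarith
    · rw [Set.indicator_of_notMem hsB]
      rcases hs with h | h | h
      · linarith
      · linarith
      · exact absurd (⟨hsub hsI, h⟩ : s ∈ B) hsB
  have hmono := integral_mono_ae
    (((integrable_const (-c)).indicator hBm).mono_measure hrle) hgt_int' hlower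
  rw [hintx₀, integral_indicator_const (-c) hBm, measureReal_def, Measure.restrict_apply hBm,
    smul_eq_mul] at hmono
  -- hmono : (volume (B ∩ Ioo 0 x₀)).toReal * (-c) ≤ -1
  have hBfin : volume B ≠ ⊤ := by
    have h1 : volume B ≤ ENNReal.ofReal a := by
      calc volume B ≤ volume (Set.Ioo (0:ℝ) a) := measure_mono fun s hs => hs.1
        _ = ENNReal.ofReal a := by rw [Real.volume_Ioo, sub_zero]
    exact (lt_of_le_of_lt h1 ENNReal.ofReal_lt_top).ne
  have hBcap : (volume (B ∩ Set.Ioo 0 x₀)).toReal ≤ (volume B).toReal :=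
    ENNReal.toReal_mono hBfin (measure_mono Set.inter_subset_left)
  have hBlow : 1 / c ≤ (volume B).toReal := by
    rw [div_le_iff₀ hc]
    have h1 : 1 ≤ (volume (B ∩ Set.Ioo 0 x₀)).toReal * c := by linarith
    linarith [mul_le_mul_of_nonneg_right hBcap hc.le]
  -- assemble the three conclusions
  refine ⟨?_, ?_, hcost⟩
  · rw [htrans (-c), htrans c, ← hB, ← hA, ← hμB, ← hμA]
    exact hABeq.symm
  · rw [htrans (-c), ← hB]
    exact ENNReal.ofReal_le_of_le_toReal hBlow
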